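/- Let H be a Hilbert space, A_1,…,A_ν pairwise commuting bounded self-adjoint operators, B a bounded operator, and h_1, …, h_k bounded operators of the form h_i = h_i(A) such that for each i and each multi-index α_0 with |α_0| + n + 1 ≤ n_0 there is an expansion [ad_A^{α_0}(B), h_i] = Σ_{1≤|α|≤n} (1/α!) (∂^α h_i)(A) ad_A^{α_0+α}(B) + R_n^{h_i}(α_0) with bounded remainders. Then [B, h_1⋯h_k] = Σ_{1≤|α|≤n} (1/α!) ∂^α(Π h_i)(A) ad_A^α(B) + Σ_{j=1}^k Σ_{|α|=0}^n (1/α!) ∂^α(Π_{i<j} h_i)(A) R_{n−|α|}^{h_j}(α) Π_{i>j} h_i(A). -/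

import Mathlib

/-- Multi-index iterated commutator `ad_a^α(b)` (coordinates in a fixed order). -/
def adm {R : Type*} [Ring R] {ν : ℕ} (a : Fin ν → R) (b : R) (α : Fin ν → ℕ) : R :=
  (List.finRange ν).foldl (fun x j => (fun y => y * a j - a j * y)^[α j] x) b

/-- Multinomial convolution of two coefficient families (the Leibniz rule for the
normalized derivative coefficients `h^{(α)} = (1/α!)∂^α h(A)`). -/
noncomputable def conv {R : Type*} [Ring R] {ν : ℕ}
    (F G : (Fin ν → ℕ) → R) (α : Fin ν → ℕ) : R :=
  ∑ β ∈ Fintype.piFinset fun j => Finset.range (α j + 1),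
    F β * G (fun j => α j - β j)

/-- Coefficient family of a product of several factors. -/
noncomputable def listConv {R : Type*} [Ring R] {ν : ℕ} :
    List ((Fin ν → ℕ) → R) → (Fin ν → ℕ) → R
  | [] => fun α => if α = 0 then 1 else 0
  | F :: L => conv F (listConv L)

namespace Stmt13

variable {ν : ℕ}

def deg (α : Fin ν → ℕ) : ℕ := ∑ v, α v

def S (ν m : ℕ) : Finset (Fin ν → ℕ) := Fintype.piFinset fun _ => Finset.range (m+1)
def U (ν m : ℕ) : Finset (Fin ν → ℕ) := (S ν m).filter fun α => deg α ≤ m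
def T (ν m : ℕ) : Finset (Fin ν → ℕ) := (S ν m).filter fun α => 1 ≤ deg α ∧ deg α ≤ m
def P (ν m : ℕ) : Finset ((Fin ν → ℕ) × (Fin ν → ℕ)) :=
  ((S ν m) ×ˢ (S ν m)).filter fun q => deg q.1 + deg q.2 ≤ m

lemma apply_le_deg (α : Fin ν → ℕ) (v : Fin ν) : α v ≤ deg α :=
  Finset.single_le_sum (fun _ _ => Nat.zero_le _) (Finset.mem_univ v)

lemma mem_S {α : Fin ν → ℕ} {m : ℕ} : α ∈ S ν m ↔ ∀ v, α v ≤ m := by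
  simp [S, Nat.lt_succ_iff]

lemma mem_U {α : Fin ν → ℕ} {m : ℕ} : α ∈ U ν m ↔ deg α ≤ m := by
  simp only [U, Finset.mem_filter, mem_S, and_iff_right_iff_imp]
  exact fun h v => le_trans (apply_le_deg α v) h

lemma mem_T {α : Fin ν → ℕ} {m : ℕ} : α ∈ T ν m ↔ 1 ≤ deg α ∧ deg α ≤ m := by
  simp only [T, Finset.mem_filter, mem_S, and_iff_right_iff_imp]
  exact fun h v => le_trans (apply_le_deg α v) h.2

lemma mem_P {q : (Fin ν → ℕ) × (Fin ν → ℕ)} {m : ℕ} :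
    q ∈ P ν m ↔ deg q.1 + deg q.2 ≤ m := by
  simp only [P, Finset.mem_filter, Finset.mem_product, mem_S, and_iff_right_iff_imp]
  exact fun h => ⟨fun v => le_trans (apply_le_deg _ v) (le_trans (Nat.le_add_right _ _) h),
    fun v => le_trans (apply_le_deg _ v) (le_trans (Nat.le_add_left _ _) h)⟩

lemma mem_box {α β : Fin ν → ℕ} :
    β ∈ (Fintype.piFinset fun v => Finset.range (α v + 1)) ↔ ∀ v, β v ≤ α v := by
  simp [Nat.lt_succ_iff]

lemma deg_zero : deg (0 : Fin ν → ℕ) = 0 := by simp [deg]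

lemma deg_add (α β : Fin ν → ℕ) : deg (α + β) = deg α + deg β := by
  simp [deg, Finset.sum_add_distrib]

lemma deg_eq_zero {α : Fin ν → ℕ} : deg α = 0 ↔ α = 0 := by
  simp [deg, Finset.sum_eq_zero_iff, funext_iff]

lemma zero_mem_U (m : ℕ) : (0 : Fin ν → ℕ) ∈ U ν m := by simp [mem_U, deg_zero]

lemma T_eq_erase (m : ℕ) : T ν m = (U ν m).erase 0 := by
  ext α
  simp only [mem_T, Finset.mem_erase, mem_U]
  constructor
  · rintro ⟨h1, h2⟩
    exact ⟨fun h0 => by simp [h0, deg_zero] at h1, h2⟩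
  · rintro ⟨h0, h2⟩
    refine ⟨Nat.one_le_iff_ne_zero.2 fun hd => h0 (deg_eq_zero.1 hd), h2⟩

variable {R : Type*} [Ring R]

/-- Sum over `U` with inner box sum equals sum over the pair set. -/
lemma pairSum (m : ℕ) (f : (Fin ν → ℕ) → (Fin ν → ℕ) → (Fin ν → ℕ) → R) :
    ∑ α ∈ U ν m, ∑ β ∈ Fintype.piFinset (fun v => Finset.range (α v + 1)),
      f α β (fun v => α v - β v)
    = ∑ q ∈ P ν m, f (q.1 + q.2) q.1 q.2 := by
  rw [Finset.sum_sigma']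
  refine Finset.sum_nbij' (fun x => (x.2, fun v => x.1 v - x.2 v))
    (fun q => ⟨q.1 + q.2, q.1⟩) ?_ ?_ ?_ ?_ ?_
  · rintro ⟨α, β⟩ hx
    simp only [Finset.mem_sigma, mem_U, mem_box] at hx
    rw [mem_P]
    have : deg β + deg (fun v => α v - β v) = deg α := by
      simp only [deg, ← Finset.sum_add_distrib]
      exact Finset.sum_congr rfl fun v _ => Nat.add_sub_cancel' (hx.2 v)
    simpa [this] using hx.1
  · intro q hq
    rw [mem_P] at hq
    simp only [Finset.mem_sigma, mem_U, mem_box]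
    refine ⟨by simpa [deg_add] using hq, fun v => by simp⟩
  · rintro ⟨α, β⟩ hx
    simp only [Finset.mem_sigma, mem_U, mem_box] at hx
    refine Sigma.ext ?_ (by simp)
    funext v
    exact Nat.add_sub_cancel' (hx.2 v)
  · intro q hq
    simp
  · rintro ⟨α, β⟩ hx
    simp only [Finset.mem_sigma, mem_U, mem_box] at hx
    congr 1
    funext v
    exact (Nat.add_sub_cancel' (hx.2 v)).symm

lemma pair_split (m : ℕ) (g : (Fin ν → ℕ) → (Fin ν → ℕ) → R) :
    ∑ q ∈ P ν m, g q.1 q.2 = ∑ β ∈ U ν m, ∑ γ ∈ U ν (m - deg β), g β γ := by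
  rw [Finset.sum_sigma']
  refine (Finset.sum_nbij' (fun x => (x.1, x.2)) (fun q => ⟨q.1, q.2⟩) ?_ ?_ ?_ ?_ ?_).symm
  · rintro ⟨β, γ⟩ hx
    simp only [Finset.mem_sigma, mem_U] at hx
    simp only [mem_P]
    omega
  · intro q hq
    rw [mem_P] at hq
    simp only [Finset.mem_sigma, mem_U]
    omega
  · rintro ⟨β, γ⟩ _; rfl
  · intro q _; rfl
  · rintro ⟨β, γ⟩ _; rfl


variable {R : Type*} [Ring R]

lemma U_sum_split (m : ℕ) (f : (Fin ν → ℕ) → R) :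
    ∑ α ∈ U ν m, f α = f 0 + ∑ α ∈ T ν m, f α := by
  rw [T_eq_erase m, ← Finset.add_sum_erase _ _ (zero_mem_U m)]

lemma conv_zero (F G : (Fin ν → ℕ) → R) : conv F G 0 = F 0 * G 0 := by
  unfold conv
  have hset : (Fintype.piFinset fun v : Fin ν => Finset.range ((0:Fin ν → ℕ) v + 1))
      = {0} := by
    ext β
    simp [funext_iff, Nat.lt_one_iff]
  rw [hset, Finset.sum_singleton]
  rfl

lemma listConv_zero (L : List ((Fin ν → ℕ) → R)) :
    listConv L 0 = (L.map fun F => F 0).prod := by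
  induction L with
  | nil => simp [listConv]
  | cons F L ih => simp [listConv, conv_zero, ih]

lemma adm_zero (a : Fin ν → R) (b : R) : adm a b 0 = b := by
  unfold adm
  suffices h : ∀ l : List (Fin ν),
      List.foldl (fun x j => (fun y => y * a j - a j * y)^[(0:Fin ν → ℕ) j] x) b l = b from h _
  intro l
  induction l with
  | nil => rfl
  | cons j l ih =>
    simpa using ih

noncomputable def remSum {ν : ℕ} :
    List (((Fin ν → ℕ) → R) × ((Fin ν → ℕ) → ℕ → R)) → (Fin ν → ℕ) → ℕ → R
  | [] => fun _ _ => 0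
  | p :: L => fun α₀ m =>
      p.2 α₀ m * (L.map fun q => q.1 0).prod +
        ∑ β ∈ U ν m, p.1 β * remSum L (α₀ + β) (m - deg β)

theorem key {n₀ : ℕ} (a : Fin ν → R) (b : R)
    (L : List (((Fin ν → ℕ) → R) × ((Fin ν → ℕ) → ℕ → R)))
    (hL : ∀ p ∈ L, ∀ (α₀ : Fin ν → ℕ) (m : ℕ), deg α₀ + m + 1 ≤ n₀ →
      adm a b α₀ * p.1 0 - p.1 0 * adm a b α₀ =
        (∑ α ∈ T ν m, p.1 α * adm a b (α₀ + α)) + p.2 α₀ m) :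
    ∀ (α₀ : Fin ν → ℕ) (m : ℕ), deg α₀ + m + 1 ≤ n₀ →
      adm a b α₀ * (L.map fun p => p.1 0).prod - (L.map fun p => p.1 0).prod * adm a b α₀ =
        (∑ α ∈ T ν m, listConv (L.map Prod.fst) α * adm a b (α₀ + α)) + remSum L α₀ m := by
  induction L with
  | nil =>
    intro α₀ m _
    simp only [List.map_nil, List.prod_nil, mul_one, one_mul, sub_self, remSum, add_zero,
      listConv]
    refine (Finset.sum_eq_zero fun α hα => ?_).symm
    rw [if_neg, zero_mul]
    intro h0
    have h1 := (mem_T.1 hα).1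
    simp [h0, deg_zero] at h1
  | cons p L ih =>
    intro α₀ m hm
    have ihL : ∀ q ∈ L, ∀ (α₀ : Fin ν → ℕ) (m : ℕ), deg α₀ + m + 1 ≤ n₀ →
        adm a b α₀ * q.1 0 - q.1 0 * adm a b α₀ =
          (∑ α ∈ T ν m, q.1 α * adm a b (α₀ + α)) + q.2 α₀ m :=
      fun q hq => hL q (List.mem_cons_of_mem p hq)
    have IH := ih ihL
    set R0 : R := (L.map fun q => q.1 0).prod with hR0
    set C : (Fin ν → ℕ) → R := listConv (L.map Prod.fst) with hC
    have hC0 : C 0 = R0 := by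
      rw [hC, listConv_zero, hR0, List.map_map]
      rfl
    have hhead := hL p (List.mem_cons_self (a := p) (l := L)) α₀ m hm
    -- per-β expansion of adm(α₀+β) * R0
    have hstep : ∀ β ∈ T ν m, p.1 β * adm a b (α₀ + β) * R0
        = p.1 β * R0 * adm a b (α₀ + β)
          + ∑ γ ∈ T ν (m - deg β), p.1 β * C γ * adm a b (α₀ + β + γ)
          + p.1 β * remSum L (α₀ + β) (m - deg β) := by
      intro β hβ
      have hd : deg (α₀ + β) + (m - deg β) + 1 ≤ n₀ := by
        rw [deg_add]
        have h2 := (mem_T.1 hβ).2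
        omega
      have hIH := IH (α₀ + β) (m - deg β) hd
      rw [mul_assoc, sub_eq_iff_eq_add'.1 hIH]
      simp only [mul_add, Finset.mul_sum, ← mul_assoc, ← add_assoc]
    -- the U-sum of conv terms
    have hU : ∑ α ∈ U ν m, conv p.1 C α * adm a b (α₀ + α)
        = (p.1 0 * R0 * adm a b α₀ + ∑ γ ∈ T ν m, p.1 0 * C γ * adm a b (α₀ + γ))
          + ∑ β ∈ T ν m, (p.1 β * R0 * adm a b (α₀ + β)
              + ∑ γ ∈ T ν (m - deg β), p.1 β * C γ * adm a b (α₀ + β + γ)) := by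
      calc ∑ α ∈ U ν m, conv p.1 C α * adm a b (α₀ + α)
          = ∑ q ∈ P ν m, p.1 q.1 * C q.2 * adm a b (α₀ + (q.1 + q.2)) := by
            simp only [conv, Finset.sum_mul]
            exact pairSum m fun α β γ => p.1 β * C γ * adm a b (α₀ + α)
        _ = ∑ β ∈ U ν m, ∑ γ ∈ U ν (m - deg β), p.1 β * C γ * adm a b (α₀ + β + γ) := by
            rw [pair_split m fun β γ => p.1 β * C γ * adm a b (α₀ + (β + γ))]
            exact Finset.sum_congr rfl fun β _ => Finset.sum_congr rfl fun γ _ => by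
              rw [add_assoc]
        _ = _ := by
            rw [U_sum_split m]
            congr 1
            · simp only [deg_zero, Nat.sub_zero, add_zero]
              rw [U_sum_split m]
              simp [hC0]
            · refine Finset.sum_congr rfl fun β hβ => ?_
              rw [U_sum_split (m - deg β)]
              simp [hC0]
    have hsplitU : ∑ α ∈ U ν m, conv p.1 C α * adm a b (α₀ + α)
        = conv p.1 C 0 * adm a b α₀ + ∑ α ∈ T ν m, conv p.1 C α * adm a b (α₀ + α) := by
      rw [U_sum_split m, add_zero]
    have hconv0 : conv p.1 C 0 = p.1 0 * R0 := by rw [conv_zero, hC0]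
    have hmainT : ∑ α ∈ T ν m, conv p.1 C α * adm a b (α₀ + α)
        = (∑ γ ∈ T ν m, p.1 0 * C γ * adm a b (α₀ + γ))
          + ∑ β ∈ T ν m, (p.1 β * R0 * adm a b (α₀ + β)
              + ∑ γ ∈ T ν (m - deg β), p.1 β * C γ * adm a b (α₀ + β + γ)) := by
      apply add_left_cancel (a := p.1 0 * R0 * adm a b α₀)
      have h2 := hsplitU
      rw [hconv0] at h2
      rw [← h2, hU, add_assoc]
    have key_rem : ∑ β ∈ U ν m, p.1 β * remSum L (α₀ + β) (m - deg β)
        = p.1 0 * remSum L α₀ m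
          + ∑ β ∈ T ν m, p.1 β * remSum L (α₀ + β) (m - deg β) := by
      rw [U_sum_split m]
      simp [deg_zero]
    -- main computation
    simp only [List.map_cons, List.prod_cons, ← hR0, ← hC]
    have h1 : adm a b α₀ * (p.1 0 * R0) - (p.1 0 * R0) * adm a b α₀
        = (adm a b α₀ * p.1 0 - p.1 0 * adm a b α₀) * R0
          + p.1 0 * (adm a b α₀ * R0 - R0 * adm a b α₀) := by noncomm_ring
    rw [h1, hhead, IH α₀ m hm]
    have hlc : ∀ α, listConv (p.1 :: L.map Prod.fst) α = conv p.1 C α := fun α => rfl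
    simp only [hlc]
    rw [hmainT]
    simp only [remSum, ← hR0]
    rw [key_rem]
    rw [add_mul, Finset.sum_mul, mul_add, Finset.sum_congr rfl hstep]
    simp only [Finset.sum_add_distrib, Finset.mul_sum, ← mul_assoc]
    abel


lemma filter_lt_zero (k : ℕ) :
    (List.finRange (k+1)).filter (fun i => decide (i < (0:Fin (k+1)))) = [] := by
  simp [List.filter_eq_nil_iff]

lemma filter_lt_succ (k : ℕ) (j : Fin k) :
    (List.finRange (k+1)).filter (fun i => decide (i < j.succ)) =
      0 :: (((List.finRange k).filter fun i => decide (i < j)).map Fin.succ) := by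
  rw [List.finRange_succ]
  simp [List.filter_cons, List.filter_map, Fin.succ_lt_succ_iff, Function.comp_def, Fin.succ_pos]

lemma filter_gt_zero (k : ℕ) :
    (List.finRange (k+1)).filter (fun i => decide ((0:Fin (k+1)) < i)) =
      (List.finRange k).map Fin.succ := by
  rw [List.finRange_succ]
  simp [List.filter_cons, List.filter_map, Function.comp_def, Fin.succ_pos]

lemma filter_gt_succ (k : ℕ) (j : Fin k) :
    (List.finRange (k+1)).filter (fun i => decide (j.succ < i)) =
      ((List.finRange k).filter fun i => decide (j < i)).map Fin.succ := by
  rw [List.finRange_succ]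
  simp [List.filter_cons, List.filter_map, Fin.succ_lt_succ_iff, Function.comp_def]

theorem remSum_eq : ∀ {k : ℕ} (h : Fin k → (Fin ν → ℕ) → R)
    (r : Fin k → (Fin ν → ℕ) → ℕ → R) (α₀ : Fin ν → ℕ) (m : ℕ),
    remSum ((List.finRange k).map fun i => (h i, r i)) α₀ m
    = ∑ j : Fin k, ∑ α ∈ U ν m,
        listConv (((List.finRange k).filter fun i => i < j).map h) α *
          r j (α₀ + α) (m - deg α) *
          (((List.finRange k).filter fun i => j < i).map fun i => h i 0).prod := by
  intro k
  induction k with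
  | zero => intro h r α₀ m; simp [remSum]
  | succ k ih =>
    intro h r α₀ m
    have e1 : remSum ((List.finRange (k+1)).map fun i => (h i, r i)) α₀ m
        = r 0 α₀ m * ((List.finRange k).map fun i => h i.succ 0).prod
          + ∑ β ∈ U ν m, h 0 β *
              remSum ((List.finRange k).map fun i => (h i.succ, r i.succ)) (α₀ + β)
                (m - deg β) := by
      rw [List.finRange_succ, List.map_cons, List.map_map]
      simp only [remSum, List.map_map, Function.comp_def]
    rw [e1, Fin.sum_univ_succ]
    -- the j = 0 term of the RHS
    have e0 : ∑ α ∈ U ν m,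
        listConv (((List.finRange (k+1)).filter fun i => i < (0:Fin (k+1))).map h) α *
          r 0 (α₀ + α) (m - deg α) *
          (((List.finRange (k+1)).filter fun i => (0:Fin (k+1)) < i).map fun i => h i 0).prod
        = r 0 α₀ m * ((List.finRange k).map fun i => h i.succ 0).prod := by
      rw [filter_lt_zero, filter_gt_zero, List.map_nil, List.map_map]
      simp only [listConv, ite_mul, one_mul, zero_mul, Function.comp_def]
      rw [Finset.sum_ite_eq' (U ν m) (0 : Fin ν → ℕ)
        (fun α => r 0 (α₀ + α) (m - deg α) * ((List.finRange k).map fun i => h i.succ 0).prod),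
        if_pos (zero_mem_U m)]
      simp [deg_zero]
    rw [e0]
    congr 1
    -- the successor terms
    have esucc : ∀ j : Fin k, ∑ α ∈ U ν m,
        listConv (((List.finRange (k+1)).filter fun i => i < j.succ).map h) α *
          r j.succ (α₀ + α) (m - deg α) *
          (((List.finRange (k+1)).filter fun i => j.succ < i).map fun i => h i 0).prod
        = ∑ β ∈ U ν m, h 0 β * ∑ γ ∈ U ν (m - deg β),
            listConv (((List.finRange k).filter fun i => i < j).map fun i => h i.succ) γ *
              r j.succ (α₀ + β + γ) (m - deg β - deg γ) *
              (((List.finRange k).filter fun i => j < i).map fun i => h i.succ 0).prod := by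
      intro j
      rw [filter_lt_succ, filter_gt_succ, List.map_cons, List.map_map, List.map_map]
      simp only [Function.comp_def]
      set C' : (Fin ν → ℕ) → R :=
        listConv (((List.finRange k).filter fun i => decide (i < j)).map fun i => h i.succ)
        with hC'
      set Pj : R :=
        (((List.finRange k).filter fun i => decide (j < i)).map fun i => h i.succ 0).prod
        with hPj
      have hlc : ∀ α, listConv (h 0 ::
          (((List.finRange k).filter fun i => decide (i < j)).map fun i => h i.succ)) α
          = conv (h 0) C' α := fun _ => rfl
      simp only [hlc]
      calc ∑ α ∈ U ν m, conv (h 0) C' α * r j.succ (α₀ + α) (m - deg α) * Pj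
          = ∑ q ∈ P ν m, h 0 q.1 * C' q.2 * r j.succ (α₀ + (q.1 + q.2))
              (m - deg (q.1 + q.2)) * Pj := by
            simp only [conv, Finset.sum_mul]
            exact pairSum m fun α β γ =>
              h 0 β * C' γ * r j.succ (α₀ + α) (m - deg α) * Pj
        _ = ∑ β ∈ U ν m, ∑ γ ∈ U ν (m - deg β), h 0 β * C' γ *
              r j.succ (α₀ + (β + γ)) (m - deg (β + γ)) * Pj := by
            exact pair_split m fun β γ => h 0 β * C' γ *
              r j.succ (α₀ + (β + γ)) (m - deg (β + γ)) * Pj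
        _ = _ := by
            refine Finset.sum_congr rfl fun β _ => ?_
            rw [Finset.mul_sum]
            refine Finset.sum_congr rfl fun γ _ => ?_
            rw [deg_add, ← Nat.sub_sub, ← add_assoc]
            simp only [mul_assoc]
    simp only [esucc]
    rw [Finset.sum_comm]
    refine Finset.sum_congr rfl fun β _ => ?_
    rw [ih (fun i => h i.succ) (fun i => r i.succ) (α₀ + β) (m - deg β), Finset.mul_sum]

theorem final {k n n₀ : ℕ}
    (a : Fin ν → R) (b : R)
    (h : Fin k → (Fin ν → ℕ) → R) (r : Fin k → (Fin ν → ℕ) → ℕ → R)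
    (hexp : ∀ (i : Fin k) (α₀ : Fin ν → ℕ) (m : ℕ), (∑ j, α₀ j) + m + 1 ≤ n₀ →
      adm a b α₀ * h i 0 - h i 0 * adm a b α₀ =
        (∑ α ∈ (Fintype.piFinset fun _ : Fin ν => Finset.range (m + 1)).filter
            (fun α => 1 ≤ ∑ j, α j ∧ ∑ j, α j ≤ m),
          h i α * adm a b (fun v => α₀ v + α v)) + r i α₀ m)
    (hn : n + 1 ≤ n₀) :
    b * ((List.finRange k).map (fun i => h i 0)).prod -
        ((List.finRange k).map (fun i => h i 0)).prod * b =
      (∑ α ∈ (Fintype.piFinset fun _ : Fin ν => Finset.range (n + 1)).filter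
          (fun α => 1 ≤ ∑ j, α j ∧ ∑ j, α j ≤ n),
        listConv ((List.finRange k).map h) α * adm a b α) +
      ∑ j : Fin k,
        ∑ α ∈ (Fintype.piFinset fun _ : Fin ν => Finset.range (n + 1)).filter
            (fun α => ∑ v, α v ≤ n),
          listConv (((List.finRange k).filter (fun i => i < j)).map h) α *
            r j α (n - ∑ v, α v) *
            (((List.finRange k).filter (fun i => j < i)).map (fun i => h i 0)).prod := by
  classical
  have hTset : ((Fintype.piFinset fun _ : Fin ν => Finset.range (n + 1)).filter
      (fun α => 1 ≤ ∑ j, α j ∧ ∑ j, α j ≤ n)) = T ν n := rfl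
  have hUset : ((Fintype.piFinset fun _ : Fin ν => Finset.range (n + 1)).filter
      (fun α : Fin ν → ℕ => ∑ v, α v ≤ n)) = U ν n := rfl
  have hdeg : ∀ α : Fin ν → ℕ, (∑ v, α v) = deg α := fun _ => rfl
  rw [hTset]
  simp only [hdeg]
  simp only [show (Finset.filter (fun α : Fin ν → ℕ => deg α ≤ n)
    (Fintype.piFinset fun _ : Fin ν => Finset.range (n+1))) = U ν n from rfl]
  set L : List (((Fin ν → ℕ) → R) × ((Fin ν → ℕ) → ℕ → R)) :=
    (List.finRange k).map fun i => (h i, r i) with hLdef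
  have hL : ∀ p ∈ L, ∀ (α₀ : Fin ν → ℕ) (m : ℕ), deg α₀ + m + 1 ≤ n₀ →
      adm a b α₀ * p.1 0 - p.1 0 * adm a b α₀ =
        (∑ α ∈ T ν m, p.1 α * adm a b (α₀ + α)) + p.2 α₀ m := by
    intro p hp
    rw [hLdef, List.mem_map] at hp
    obtain ⟨i, -, rfl⟩ := hp
    intro α₀ m hm
    exact hexp i α₀ m hm
  have H := key a b L hL 0 n (by simp [deg_zero]; omega)
  rw [remSum_eq h r 0 n] at H
  simp only [hLdef, zero_add, adm_zero, List.map_map, Function.comp_def] at H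
  simpa using H

end Stmt13


/-- Product expansion: if each factor `h_i` admits a commutator expansion of every
order `m` (with `|α₀| + m + 1 ≤ n₀`) with remainders `r_i`, then the product
`h_1 ⋯ h_k` admits the stated expansion of order `n`. -/
theorem stmt_13 {R : Type*} [Ring R] {ν k n n₀ : ℕ}
    (a : Fin ν → R) (b : R) (hcomm : ∀ i j, a i * a j = a j * a i)
    (h : Fin k → (Fin ν → ℕ) → R) (r : Fin k → (Fin ν → ℕ) → ℕ → R)
    (hexp : ∀ (i : Fin k) (α₀ : Fin ν → ℕ) (m : ℕ), (∑ j, α₀ j) + m + 1 ≤ n₀ →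
      adm a b α₀ * h i 0 - h i 0 * adm a b α₀ =
        (∑ α ∈ (Fintype.piFinset fun _ : Fin ν => Finset.range (m + 1)).filter
            (fun α => 1 ≤ ∑ j, α j ∧ ∑ j, α j ≤ m),
          h i α * adm a b (fun v => α₀ v + α v)) + r i α₀ m)
    (hn : n + 1 ≤ n₀) :
    b * ((List.finRange k).map (fun i => h i 0)).prod -
        ((List.finRange k).map (fun i => h i 0)).prod * b =
      (∑ α ∈ (Fintype.piFinset fun _ : Fin ν => Finset.range (n + 1)).filter
          (fun α => 1 ≤ ∑ j, α j ∧ ∑ j, α j ≤ n),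
        listConv ((List.finRange k).map h) α * adm a b α) +
      ∑ j : Fin k,
        ∑ α ∈ (Fintype.piFinset fun _ : Fin ν => Finset.range (n + 1)).filter
            (fun α => ∑ v, α v ≤ n),
          listConv (((List.finRange k).filter (fun i => i < j)).map h) α *
            r j α (n - ∑ v, α v) *
            (((List.finRange k).filter (fun i => j < i)).map (fun i => h i 0)).prod := by
  exact Stmt13.final a b h r hexp hn
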